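/- Let k be a field of characteristic 2 and V a k-vector space with dim V ≥ 1. Let L_2^res(V) ⊆ V^{⊗2} be the span of all a⊗a and a⊗b − b⊗a for a,b ∈ V, and L_2(V) the span of a⊗b − b⊗a. Then γ_2(L_2^res) = γ_2(L_2) is the 1-dimensional trivial k(Σ_2)-module spanned by x_1⊗x_2 + x_2⊗x_1, the coinvariants γ_2(L_2^res) ⊗_{k(Σ_2)} V^{⊗2} are isomorphic to the symmetric square S_2(V), and the natural map γ_2(L_2^res) ⊗_{k(Σ_2)} V^{⊗2} → L_2^res(V) has image exactly L_2(V), hence is not surjective. -/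

import Mathlib

open scoped TensorProduct

section
variable (k : Type) [Field k]

/-- `L_2(V) ⊆ V ⊗ V`: the span of the commutators `a ⊗ b - b ⊗ a`. -/
noncomputable def L2 (V : Type) [AddCommGroup V] [Module k V] : Submodule k (V ⊗[k] V) :=
  Submodule.span k {x | ∃ a b : V, x = a ⊗ₜ[k] b - b ⊗ₜ[k] a}

/-- `L_2^{res}(V) ⊆ V ⊗ V`: the span of the squares `a ⊗ a` and commutators `a ⊗ b - b ⊗ a`. -/
noncomputable def L2res (V : Type) [AddCommGroup V] [Module k V] : Submodule k (V ⊗[k] V) :=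
  Submodule.span k ({x | ∃ a : V, x = a ⊗ₜ[k] a} ∪ {x | ∃ a b : V, x = a ⊗ₜ[k] b - b ⊗ₜ[k] a})

/-- The symmetric square `S_2(V) = (V ⊗ V)/(a ⊗ b - b ⊗ a)`. -/
noncomputable abbrev S2 (V : Type) [AddCommGroup V] [Module k V] :=
  (V ⊗[k] V) ⧸ Submodule.span k {x : V ⊗[k] V | ∃ a b : V, x = a ⊗ₜ[k] b - b ⊗ₜ[k] a}

/-- The face map `d_i : V̄_2 → V̄_1`. -/
noncomputable def dd (i : Fin 2) :
    ((Fin 2 → k) ⊗[k] (Fin 2 → k)) →ₗ[k] ((Fin 1 → k) ⊗[k] (Fin 1 → k)) :=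
  TensorProduct.map (LinearMap.funLeft k k (Fin.succAbove i))
    (LinearMap.funLeft k k (Fin.succAbove i))

/-- The transposition acting on `V̄_2` by `x_1 ↔ x_2`. -/
noncomputable def swapV : (Fin 2 → k) →ₗ[k] (Fin 2 → k) :=
  LinearMap.funLeft k k ⇑(Equiv.swap (0 : Fin 2) 1)

/-- `γ_2(B) = B(V̄_2) ∩ Ker B(d_1) ∩ Ker B(d_2)` for a submodule functor `B` of `T_2`. -/
noncomputable def gamma2Of (B : Submodule k ((Fin 2 → k) ⊗[k] (Fin 2 → k))) :
    Submodule k ((Fin 2 → k) ⊗[k] (Fin 2 → k)) :=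
  B ⊓ LinearMap.ker (dd k 0) ⊓ LinearMap.ker (dd k 1)

end

/- ====================  Auxiliary machinery  ==================== -/

section Helpers
variable (k : Type) [Field k]

/-- Product of two functionals, as a functional on the tensor product. -/
noncomputable def bfn {V W : Type} [AddCommGroup V] [Module k V] [AddCommGroup W] [Module k W]
    (f : V →ₗ[k] k) (g : W →ₗ[k] k) : (V ⊗[k] W) →ₗ[k] k :=
  TensorProduct.lift (LinearMap.mk₂ k (fun a b => f a * g b)
    (by intros; simp [map_add, add_mul]) (by intros; simp; ring)
    (by intros; simp [map_add, mul_add]) (by intros; simp; ring))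

@[simp] lemma bfn_tmul {V W : Type} [AddCommGroup V] [Module k V] [AddCommGroup W] [Module k W]
    (f : V →ₗ[k] k) (g : W →ₗ[k] k) (a : V) (b : W) : bfn k f g (a ⊗ₜ[k] b) = f a * g b := rfl

/-- Coordinate functionals on `(Fin 2 → k) ⊗ (Fin 2 → k)`. -/
noncomputable def phi (i j : Fin 2) : ((Fin 2 → k) ⊗[k] (Fin 2 → k)) →ₗ[k] k :=
  bfn k (LinearMap.proj i) (LinearMap.proj j)

@[simp] lemma phi_tmul (i j : Fin 2) (a b : Fin 2 → k) :
    phi k i j (a ⊗ₜ[k] b) = a i * b j := rfl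

lemma expand_vec (a : Fin 2 → k) :
    a = a 0 • (Pi.single 0 1 : Fin 2 → k) + a 1 • (Pi.single 1 1 : Fin 2 → k) := by
  funext i; fin_cases i <;> simp

lemma expand (z : (Fin 2 → k) ⊗[k] (Fin 2 → k)) :
    z = phi k 0 0 z • (Pi.single 0 1 : Fin 2 → k) ⊗ₜ[k] (Pi.single 0 1 : Fin 2 → k)
      + phi k 0 1 z • (Pi.single 0 1 : Fin 2 → k) ⊗ₜ[k] (Pi.single 1 1 : Fin 2 → k)
      + phi k 1 0 z • (Pi.single 1 1 : Fin 2 → k) ⊗ₜ[k] (Pi.single 0 1 : Fin 2 → k)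
      + phi k 1 1 z • (Pi.single 1 1 : Fin 2 → k) ⊗ₜ[k] (Pi.single 1 1 : Fin 2 → k) := by
  have h : ((phi k 0 0).smulRight ((Pi.single 0 1 : Fin 2 → k) ⊗ₜ[k] (Pi.single 0 1 : Fin 2 → k))
      + (phi k 0 1).smulRight ((Pi.single 0 1 : Fin 2 → k) ⊗ₜ[k] (Pi.single 1 1 : Fin 2 → k))
      + (phi k 1 0).smulRight ((Pi.single 1 1 : Fin 2 → k) ⊗ₜ[k] (Pi.single 0 1 : Fin 2 → k))
      + (phi k 1 1).smulRight ((Pi.single 1 1 : Fin 2 → k) ⊗ₜ[k] (Pi.single 1 1 : Fin 2 → k)))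
      = LinearMap.id := by
    apply TensorProduct.ext'
    intro a b
    simp only [LinearMap.add_apply, LinearMap.smulRight_apply, phi_tmul, LinearMap.id_apply]
    conv_rhs => rw [expand_vec k a, expand_vec k b]
    simp only [TensorProduct.add_tmul, TensorProduct.tmul_add, TensorProduct.smul_tmul,
      TensorProduct.tmul_smul, smul_smul]
    module
  conv_lhs => rw [← LinearMap.id_apply (R := k) z, ← h]
  simp

/-- The generator `x₁ ⊗ x₂ + x₂ ⊗ x₁`. -/
noncomputable def tt : (Fin 2 → k) ⊗[k] (Fin 2 → k) :=
  (Pi.single 0 1 : Fin 2 → k) ⊗ₜ[k] (Pi.single 1 1 : Fin 2 → k)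
    + (Pi.single 1 1 : Fin 2 → k) ⊗ₜ[k] (Pi.single 0 1 : Fin 2 → k)

lemma phi01_tt : phi k 0 1 (tt k) = 1 := by
  simp [tt, Pi.single_eq_same, Pi.single_eq_of_ne]

lemma tt_ne_zero : tt k ≠ 0 := by
  intro h
  have h1 := congrArg (phi k 0 1) h
  rw [phi01_tt, map_zero] at h1
  exact one_ne_zero h1

lemma succAbove00 : Fin.succAbove (0 : Fin 2) (0 : Fin 1) = 1 := by decide
lemma succAbove10 : Fin.succAbove (1 : Fin 2) (0 : Fin 1) = 0 := by decide

lemma phi_eq_comp0 : phi k 1 1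
    = (bfn k (LinearMap.proj 0) (LinearMap.proj 0)) ∘ₗ dd k 0 := by
  apply TensorProduct.ext'
  intro a b
  simp [dd, LinearMap.funLeft_apply, succAbove00]

lemma phi_eq_comp1 : phi k 0 0
    = (bfn k (LinearMap.proj 0) (LinearMap.proj 0)) ∘ₗ dd k 1 := by
  apply TensorProduct.ext'
  intro a b
  simp [dd, LinearMap.funLeft_apply, succAbove10]

lemma phi11_of_ker {z : (Fin 2 → k) ⊗[k] (Fin 2 → k)} (h : z ∈ LinearMap.ker (dd k 0)) :
    phi k 1 1 z = 0 := by
  rw [phi_eq_comp0]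
  simp only [LinearMap.comp_apply, LinearMap.mem_ker.mp h, map_zero]

lemma phi00_of_ker {z : (Fin 2 → k) ⊗[k] (Fin 2 → k)} (h : z ∈ LinearMap.ker (dd k 1)) :
    phi k 0 0 z = 0 := by
  rw [phi_eq_comp1]
  simp only [LinearMap.comp_apply, LinearMap.mem_ker.mp h, map_zero]

lemma phi_sym_of_L2res [CharP k 2] {z : (Fin 2 → k) ⊗[k] (Fin 2 → k)}
    (h : z ∈ L2res k (Fin 2 → k)) : phi k 0 1 z = phi k 1 0 z := by
  have h2 : (2 : k) = 0 := CharTwo.two_eq_zero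
  have hle : L2res k (Fin 2 → k) ≤ LinearMap.ker (phi k 0 1 - phi k 1 0) := by
    rw [L2res, Submodule.span_le]
    rintro x (⟨a, rfl⟩ | ⟨a, b, rfl⟩) <;>
      simp only [SetLike.mem_coe, LinearMap.mem_ker, LinearMap.sub_apply, map_sub, phi_tmul]
    · ring
    · linear_combination (a 0 * b 1 - a 1 * b 0) * h2
  have := hle h
  rw [LinearMap.mem_ker, LinearMap.sub_apply, sub_eq_zero] at this
  exact this

/-- `-v = v` in a module over a characteristic-2 field. -/
lemma char2_neg_eq [CharP k 2] {M : Type*} [AddCommGroup M] [Module k M] (v : M) : -v = v := by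
  have h2 : (2 : k) = 0 := CharTwo.two_eq_zero
  rw [neg_eq_iff_add_eq_zero, ← two_smul k v, h2, zero_smul]

lemma char2_add_self [CharP k 2] {M : Type*} [AddCommGroup M] [Module k M] (v : M) :
    v + v = 0 := by
  rw [← two_smul k v, CharTwo.two_eq_zero (R := k), zero_smul]

lemma tt_mem_L2 [CharP k 2] : tt k ∈ L2 k (Fin 2 → k) := by
  apply Submodule.subset_span
  refine ⟨Pi.single 0 1, Pi.single 1 1, ?_⟩
  rw [tt, sub_eq_add_neg, char2_neg_eq k]

lemma fL0_single0 :
    LinearMap.funLeft k k (Fin.succAbove (0 : Fin 2)) (Pi.single 0 1 : Fin 2 → k) = 0 := by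
  have h : ∀ i : Fin 1, (Fin.succ i : Fin 2) = 1 := by decide
  funext i
  simp [LinearMap.funLeft_apply, h, Pi.single_eq_of_ne]

lemma fL1_single1 :
    LinearMap.funLeft k k (Fin.succAbove (1 : Fin 2)) (Pi.single 1 1 : Fin 2 → k) = 0 := by
  have h : ∀ i : Fin 1, Fin.succAbove (1 : Fin 2) i = 0 := by decide
  funext i
  simp [LinearMap.funLeft_apply, h, Pi.single_eq_of_ne]

lemma tt_mem_ker0 : tt k ∈ LinearMap.ker (dd k 0) := by
  rw [LinearMap.mem_ker, tt, map_add, dd, TensorProduct.map_tmul, TensorProduct.map_tmul,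
    fL0_single0, TensorProduct.zero_tmul, TensorProduct.tmul_zero]
  simp

lemma tt_mem_ker1 : tt k ∈ LinearMap.ker (dd k 1) := by
  rw [LinearMap.mem_ker, tt, map_add, dd, TensorProduct.map_tmul, TensorProduct.map_tmul,
    fL1_single1, TensorProduct.zero_tmul, TensorProduct.tmul_zero]
  simp

lemma L2_le_L2res (V : Type) [AddCommGroup V] [Module k V] : L2 k V ≤ L2res k V :=
  Submodule.span_mono Set.subset_union_right

/-- The main computation: `γ₂(B) = span {tt}` for any `B` between `L2` and `L2res`. -/
lemma gamma2_eq_span [CharP k 2] (B : Submodule k ((Fin 2 → k) ⊗[k] (Fin 2 → k)))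
    (hB1 : B ≤ L2res k (Fin 2 → k)) (hB2 : tt k ∈ B) :
    gamma2Of k B = Submodule.span k {tt k} := by
  apply le_antisymm
  · rintro z ⟨⟨hzB, hz0⟩, hz1⟩
    rw [Submodule.mem_span_singleton]
    refine ⟨phi k 0 1 z, ?_⟩
    have e00 : phi k 0 0 z = 0 := phi00_of_ker k hz1
    have e11 : phi k 1 1 z = 0 := phi11_of_ker k hz0
    have e01 : phi k 0 1 z = phi k 1 0 z := phi_sym_of_L2res k (hB1 hzB)
    rw [tt, smul_add]
    conv_rhs => rw [expand k z]
    rw [e00, e11, ← e01, zero_smul, zero_smul, zero_add, add_zero]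
  · rw [Submodule.span_le, Set.singleton_subset_iff]
    exact ⟨⟨hB2, tt_mem_ker0 k⟩, tt_mem_ker1 k⟩

lemma swap01 : (Equiv.swap (0 : Fin 2) 1) 0 = 1 := by decide
lemma swap10 : (Equiv.swap (0 : Fin 2) 1) 1 = 0 := by decide

lemma swapV_single0 : swapV k (Pi.single 0 1 : Fin 2 → k) = Pi.single 1 1 := by
  funext i
  fin_cases i <;>
    simp [swapV, LinearMap.funLeft_apply, Equiv.swap_apply_def, Fin.ext_iff, Pi.single_apply]

lemma swapV_single1 : swapV k (Pi.single 1 1 : Fin 2 → k) = Pi.single 0 1 := by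
  funext i
  fin_cases i <;>
    simp [swapV, LinearMap.funLeft_apply, Equiv.swap_apply_def, Fin.ext_iff, Pi.single_apply]

lemma map_swap_tt : TensorProduct.map (swapV k) (swapV k) (tt k) = tt k := by
  rw [tt, map_add, TensorProduct.map_tmul, TensorProduct.map_tmul,
    swapV_single0, swapV_single1, add_comm]

variable (V : Type) [AddCommGroup V] [Module k V]

/-- The "antisymmetrization" map `v ↦ v - σ v`. -/
noncomputable def qV : (V ⊗[k] V) →ₗ[k] (V ⊗[k] V) :=
  LinearMap.id - (TensorProduct.comm k V V).toLinearMap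

@[simp] lemma qV_apply (v : V ⊗[k] V) : qV k V v = v - TensorProduct.comm k V V v := rfl

lemma qV_mem_L2 (v : V ⊗[k] V) : qV k V v ∈ L2 k V := by
  induction v using TensorProduct.induction_on with
  | zero => simp [qV]
  | tmul a b =>
      simp only [qV_apply, TensorProduct.comm_tmul]
      exact Submodule.subset_span ⟨a, b, rfl⟩
  | add x y hx hy =>
      rw [map_add]
      exact Submodule.add_mem _ hx hy

lemma comm_comm (v : V ⊗[k] V) :
    TensorProduct.comm k V V (TensorProduct.comm k V V v) = v := by
  induction v using TensorProduct.induction_on with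
  | zero => simp
  | tmul a b => rw [TensorProduct.comm_tmul, TensorProduct.comm_tmul]
  | add x y hx hy => rw [map_add, map_add, hx, hy]

lemma L2_ne_L2res {a : V} (ha : a ≠ 0) : L2 k V ≠ L2res k V := by
  intro h
  have hmem : (a ⊗ₜ[k] a : V ⊗[k] V) ∈ L2 k V := by
    rw [h, L2res]
    exact Submodule.subset_span (Or.inl ⟨a, rfl⟩)
  have h1 : ¬ ∀ φ : Module.Dual k V, φ a = 0 := fun h' =>
    ha ((Module.forall_dual_apply_eq_zero_iff k a).mp h')
  push_neg at h1
  obtain ⟨φ1, hφ1⟩ := h1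
  have hke : L2 k V ≤ LinearMap.ker (bfn k φ1 φ1) := by
    rw [L2, Submodule.span_le]
    rintro x ⟨p, q, rfl⟩
    simp only [SetLike.mem_coe, LinearMap.mem_ker, map_sub, bfn_tmul]
    ring
  have := hke hmem
  rw [LinearMap.mem_ker, bfn_tmul] at this
  exact mul_ne_zero hφ1 hφ1 this

end Helpers

/-- Over a field of characteristic `2` and `dim V ≥ 1`: `γ_2(L_2^{res}) = γ_2(L_2)` is the
one-dimensional trivial `k(Σ_2)`-module spanned by `x_1 ⊗ x_2 + x_2 ⊗ x_1`; the coinvariants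
`γ_2(L_2^{res}) ⊗_{k(Σ_2)} V^{⊗2}` are isomorphic to the symmetric square `S_2(V)`; and the
natural map `γ_2(L_2^{res}) ⊗_{k(Σ_2)} V^{⊗2} → L_2^{res}(V)` has image exactly `L_2(V)`, hence
is not surjective. -/
theorem stmt10 (k : Type) [Field k] [CharP k 2] (V : Type) [AddCommGroup V] [Module k V]
    (hV : 1 ≤ Module.rank k V) :
    -- γ_2(L_2^res) = γ_2(L_2), one-dimensional, spanned by x₁⊗x₂ + x₂⊗x₁, with trivial action
    gamma2Of k (L2res k (Fin 2 → k)) = gamma2Of k (L2 k (Fin 2 → k)) ∧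
    gamma2Of k (L2res k (Fin 2 → k))
      = Submodule.span k {(Pi.single 0 1 : Fin 2 → k) ⊗ₜ[k] (Pi.single 1 1 : Fin 2 → k)
          + (Pi.single 1 1 : Fin 2 → k) ⊗ₜ[k] (Pi.single 0 1 : Fin 2 → k)} ∧
    Module.finrank k (gamma2Of k (L2res k (Fin 2 → k))) = 1 ∧
    (∀ y ∈ gamma2Of k (L2res k (Fin 2 → k)),
      TensorProduct.map (swapV k) (swapV k) y = y) ∧
    -- coinvariants and the natural map, with γ_2 realized by an abstract module G
    (∀ (G : Type) [AddCommGroup G] [Module k G] (u : G →ₗ[k] (Fin 2 → k) ⊗[k] (Fin 2 → k)),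
      Function.Injective u →
      LinearMap.range u = gamma2Of k (L2res k (Fin 2 → k)) →
      -- the balancing relations for ⊗_{k(Σ_2)}
      ∀ rel : Submodule k (G ⊗[k] (V ⊗[k] V)),
        rel = Submodule.span k
          {z | ∃ (x y : G) (v : V ⊗[k] V),
              u y = TensorProduct.map (swapV k) (swapV k) (u x) ∧
              z = y ⊗ₜ[k] v - x ⊗ₜ[k] (TensorProduct.comm k V V v)} →
        -- γ_2(L_2^res) ⊗_{k(Σ_2)} V^{⊗2} ≅ S_2(V)
        Nonempty (((G ⊗[k] (V ⊗[k] V)) ⧸ rel) ≃ₗ[k] S2 k V) ∧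
        -- the natural map to L_2^res(V) has image L_2(V) and is not surjective
        ∃ c : ((G ⊗[k] (V ⊗[k] V)) ⧸ rel) →ₗ[k] V ⊗[k] V,
          (∀ x : G,
            u x = (Pi.single 0 1 : Fin 2 → k) ⊗ₜ[k] (Pi.single 1 1 : Fin 2 → k)
                - (Pi.single 1 1 : Fin 2 → k) ⊗ₜ[k] (Pi.single 0 1 : Fin 2 → k) →
            ∀ a b : V,
              c (Submodule.Quotient.mk (x ⊗ₜ[k] (a ⊗ₜ[k] b))) = a ⊗ₜ[k] b - b ⊗ₜ[k] a) ∧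
          LinearMap.range c = L2 k V ∧
          LinearMap.range c ≤ L2res k V ∧
          LinearMap.range c ≠ L2res k V) := by
  have h2 : (2 : k) = 0 := CharTwo.two_eq_zero
  obtain ⟨a0, ha0⟩ : ∃ a : V, a ≠ 0 :=
    rank_pos_iff_exists_ne_zero.mp (lt_of_lt_of_le zero_lt_one hV)
  have hres : gamma2Of k (L2res k (Fin 2 → k)) = Submodule.span k {tt k} :=
    gamma2_eq_span k _ le_rfl (L2_le_L2res k _ (tt_mem_L2 k))
  have hl2 : gamma2Of k (L2 k (Fin 2 → k)) = Submodule.span k {tt k} :=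
    gamma2_eq_span k _ (L2_le_L2res k _) (tt_mem_L2 k)
  refine ⟨hres.trans hl2.symm, hres, ?_, ?_, ?_⟩
  · rw [hres]
    exact finrank_span_singleton (tt_ne_zero k)
  · intro y hy
    rw [hres, Submodule.mem_span_singleton] at hy
    obtain ⟨c, rfl⟩ := hy
    rw [map_smul, map_swap_tt]
  · intro G _ _ u hInj hu rel hrel
    -- the functional ℓ on G
    set ℓ : G →ₗ[k] k := (phi k 0 1) ∘ₗ u with hℓ
    have key : ∀ x : G, u x = ℓ x • tt k := by
      intro x
      have : u x ∈ Submodule.span k {tt k} := by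
        rw [← hres, ← hu]; exact ⟨x, rfl⟩
      rw [Submodule.mem_span_singleton] at this
      obtain ⟨c, hc⟩ := this
      have hℓx : ℓ x = c := by
        show phi k 0 1 (u x) = c
        rw [← hc, map_smul, phi01_tt, smul_eq_mul, mul_one]
      rw [hℓx]; exact hc.symm
    obtain ⟨x0, hx0⟩ : ∃ x0 : G, u x0 = tt k := by
      have : tt k ∈ LinearMap.range u := by
        rw [hu, hres]; exact Submodule.mem_span_singleton_self _
      exact this
    have hℓx0 : ℓ x0 = 1 := by
      show phi k 0 1 (u x0) = 1; rw [hx0, phi01_tt]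
    have key2 : ∀ x y : G, u y = TensorProduct.map (swapV k) (swapV k) (u x) → y = x := by
      intro x y hxy
      apply hInj
      rw [hxy, key x, map_smul, map_swap_tt, ← key x]
    have hℓinj : Function.Injective ℓ := by
      intro x y hxy
      apply hInj
      rw [key x, key y, hxy]
    have hℓsurj : Function.Surjective ℓ := fun c =>
      ⟨c • x0, by rw [map_smul, hℓx0, smul_eq_mul, mul_one]⟩
    let eℓ : G ≃ₗ[k] k := LinearEquiv.ofBijective ℓ ⟨hℓinj, hℓsurj⟩
    let E : (G ⊗[k] (V ⊗[k] V)) ≃ₗ[k] (V ⊗[k] V) :=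
      (TensorProduct.congr eℓ (LinearEquiv.refl k (V ⊗[k] V))).trans
        (TensorProduct.lid k (V ⊗[k] V))
    have hE : ∀ (x : G) (v : V ⊗[k] V), E (x ⊗ₜ[k] v) = ℓ x • v := by
      intro x v
      simp [E, eℓ, TensorProduct.congr_tmul, TensorProduct.lid_tmul,
        LinearEquiv.ofBijective_apply]
      rfl
    set ctil : (G ⊗[k] (V ⊗[k] V)) →ₗ[k] (V ⊗[k] V) :=
      (qV k V) ∘ₗ (E : G ⊗[k] (V ⊗[k] V) →ₗ[k] V ⊗[k] V) with hctil
    have hct : ∀ (x : G) (v : V ⊗[k] V),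
        ctil (x ⊗ₜ[k] v) = ℓ x • (v - TensorProduct.comm k V V v) := by
      intro x v
      show qV k V (E (x ⊗ₜ[k] v)) = _
      rw [hE, qV_apply, map_smul, ← smul_sub]
    have hker : rel ≤ LinearMap.ker ctil := by
      rw [hrel, Submodule.span_le]
      rintro z ⟨x, y, v, huv, rfl⟩
      have hyx : y = x := key2 x y huv
      subst hyx
      simp only [SetLike.mem_coe, LinearMap.mem_ker, map_sub, hct]
      rw [comm_comm,
        show TensorProduct.comm k V V v - v = -(v - TensorProduct.comm k V V v) from
          (neg_sub _ _).symm,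
        smul_neg, sub_neg_eq_add, char2_add_self k]
    have hrelmap : Submodule.map (E : G ⊗[k] (V ⊗[k] V) →ₗ[k] V ⊗[k] V) rel
        = Submodule.span k {x : V ⊗[k] V | ∃ a b : V, x = a ⊗ₜ[k] b - b ⊗ₜ[k] a} := by
      rw [hrel, Submodule.map_span]
      apply le_antisymm
      · rw [Submodule.span_le]
        rintro w ⟨z, ⟨x, y, v, huv, rfl⟩, rfl⟩
        have hyx : y = x := key2 x y huv
        subst hyx
        have hEz : E (y ⊗ₜ[k] v - y ⊗ₜ[k] (TensorProduct.comm k V V) v)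
            = ℓ y • (v - TensorProduct.comm k V V v) := by
          rw [map_sub, hE, hE, ← smul_sub]
        simp only [SetLike.mem_coe, LinearEquiv.coe_coe]
        rw [hEz]
        exact Submodule.smul_mem _ _ (qV_mem_L2 k V v)
      · rw [Submodule.span_le]
        rintro w ⟨a, b, rfl⟩
        refine Submodule.subset_span
          ⟨x0 ⊗ₜ[k] (a ⊗ₜ[k] b) - x0 ⊗ₜ[k] (b ⊗ₜ[k] a),
            ⟨x0, x0, a ⊗ₜ[k] b, by rw [hx0, map_swap_tt], by rw [TensorProduct.comm_tmul]⟩, ?_⟩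
        simp only [LinearEquiv.coe_coe]
        rw [map_sub, hE, hE, hℓx0, one_smul, one_smul]
    set c : ((G ⊗[k] (V ⊗[k] V)) ⧸ rel) →ₗ[k] V ⊗[k] V := Submodule.liftQ rel ctil hker with hc
    have hrange : LinearMap.range c = L2 k V := by
      rw [hc, Submodule.range_liftQ]
      apply le_antisymm
      · rintro w ⟨z, rfl⟩
        exact qV_mem_L2 k V (E z)
      · rw [L2, Submodule.span_le]
        rintro w ⟨a, b, rfl⟩
        refine ⟨x0 ⊗ₜ[k] (a ⊗ₜ[k] b), ?_⟩
        rw [hct, hℓx0, one_smul, TensorProduct.comm_tmul]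
    refine ⟨⟨Submodule.Quotient.equiv rel _ E hrelmap⟩, c, ?_, hrange, ?_, ?_⟩
    · intro x hx a b
      have hxt : u x = tt k := by
        rw [hx, tt, sub_eq_add_neg, char2_neg_eq k]
      have hlx : ℓ x = 1 := by show phi k 0 1 (u x) = 1; rw [hxt, phi01_tt]
      rw [hc, Submodule.liftQ_apply, hct, hlx, one_smul, TensorProduct.comm_tmul]
    · rw [hrange]; exact L2_le_L2res k V
    · rw [hrange]; exact L2_ne_L2res k V ha0
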